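/- Let q ≥ 1, α > 0, and let φ : [0,∞) → ℝ^q be continuous and bounded. Define the Kreisselmeier extended regressor Φ(t) = ∫₀ᵗ e^{−α(t−s)}·φ(s)·φ(s)ᵀ ds ∈ ℝ^{q×q} and Δ(t) = det Φ(t). If Δ is PE, i.e., there exist T' > 0 and δ' > 0 such that ∫_t^{t+T'} Δ(s)² ds ≥ δ' for all t ≥ 0, then φ is PE, i.e., there exist T > 0 and δ > 0 such that ∫_t^{t+T} φ(s)·φ(s)ᵀ ds ⪰ δ·I_q for all t ≥ 0. -/

import Mathlib

open MeasureTheory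

/-- The matrix `∫_a^b φ(s) φ(s)ᵀ ds`, defined entrywise. -/
noncomputable def gramOn (q : ℕ) (φ : ℝ → Fin q → ℝ) (a b : ℝ) :
    Matrix (Fin q) (Fin q) ℝ :=
  Matrix.of fun i j => ∫ s in a..b, φ s i * φ s j

/-- The Kreisselmeier extended regressor
`Φ(t) = ∫₀ᵗ e^{-α(t-s)} φ(s) φ(s)ᵀ ds`, defined entrywise. -/
noncomputable def kreisselmeierPhi (q : ℕ) (α : ℝ) (φ : ℝ → Fin q → ℝ) (t : ℝ) :
    Matrix (Fin q) (Fin q) ℝ :=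
  Matrix.of fun i j => ∫ s in (0:ℝ)..t, Real.exp (-α * (t - s)) * (φ s i * φ s j)

open Finset in
lemma dot_sum_left {q : ℕ} (f : Fin q → (Fin q → ℝ)) (w : Fin q → ℝ) :
    dotProduct (∑ i, f i) w = ∑ i, dotProduct (f i) w := by
  simp only [dotProduct, Finset.sum_apply, Finset.sum_mul]
  exact Finset.sum_comm

open Finset in
lemma dot_sum_right {q : ℕ} (w : Fin q → ℝ) (f : Fin q → (Fin q → ℝ)) :
    dotProduct w (∑ i, f i) = ∑ i, dotProduct w (f i) := by
  simp only [dotProduct, Finset.sum_apply, Finset.mul_sum]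
  exact Finset.sum_comm

open Finset in
lemma psd_det_le {q : ℕ} (A : Matrix (Fin q) (Fin q) ℝ) (hA : A.PosSemidef)
    (M : ℝ) (hM : 0 ≤ M)
    (hbd : ∀ y : Fin q → ℝ, dotProduct y (A.mulVec y) ≤ M * dotProduct y y)
    (x : Fin q → ℝ) :
    A.det * dotProduct x x ≤ M^(q-1) * dotProduct x (A.mulVec x) := by
  classical
  have hH : A.IsHermitian := hA.1
  set b := hH.eigenvectorBasis with hb
  set lam := hH.eigenvalues with hlam
  let v : Fin q → (Fin q → ℝ) := fun i => b i
  have hAv : ∀ i, A.mulVec (v i) = lam i • v i := fun i => hH.mulVec_eigenvectorBasis i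
  have horth : ∀ i j, dotProduct (v i) (v j) = if i = j then (1:ℝ) else 0 := by
    intro i j
    have h0 : (inner ℝ (b i) (b j) : ℝ) = if i = j then (1:ℝ) else 0 :=
      orthonormal_iff_ite.mp b.orthonormal i j
    have h1 : (inner ℝ (b i) (b j) : ℝ) = dotProduct (v i) (v j) := by
      simp [v, dotProduct, PiLp.inner_apply, mul_comm]
    rw [← h1, h0]
  obtain ⟨c, hc⟩ : ∃ c : Fin q → ℝ, x = ∑ i, c i • v i :=
    ⟨fun i => b.repr (WithLp.toLp 2 x) i, by
      have := congrArg WithLp.ofLp (b.sum_repr (WithLp.toLp 2 x))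
      simpa [v] using this.symm⟩
  have hnorm : dotProduct x x = ∑ i, (c i)^2 := by
    rw [hc, dot_sum_left]
    refine Finset.sum_congr rfl fun i _ => ?_
    rw [smul_dotProduct, dot_sum_right]
    have : ∀ j, dotProduct (v i) (c j • v j) = c j * (if i = j then (1:ℝ) else 0) := by
      intro j; rw [dotProduct_smul, horth]; simp
    rw [Finset.sum_congr rfl fun j _ => this j]
    simp [pow_two]
  have hAx : A.mulVec x = ∑ i, (c i * lam i) • v i := by
    rw [hc]
    have h2 : A.mulVec (∑ i, c i • v i) = ∑ i, A.mulVec (c i • v i) := by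
      exact map_sum A.mulVecLin (fun i => c i • v i) univ
    rw [h2]
    refine Finset.sum_congr rfl fun i _ => ?_
    rw [Matrix.mulVec_smul, hAv i, smul_smul]
  have hquad : dotProduct x (A.mulVec x) = ∑ i, lam i * (c i)^2 := by
    rw [hAx, hc, dot_sum_left]
    refine Finset.sum_congr rfl fun i _ => ?_
    rw [smul_dotProduct, dot_sum_right]
    have : ∀ j, dotProduct (v i) ((c j * lam j) • v j)
        = (c j * lam j) * (if i = j then (1:ℝ) else 0) := by
      intro j; rw [dotProduct_smul, horth]; simp
    rw [Finset.sum_congr rfl fun j _ => this j]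
    simp [pow_two]; ring
  have hlam0 : ∀ i, 0 ≤ lam i := fun i => hA.eigenvalues_nonneg i
  have hlamM : ∀ i, lam i ≤ M := by
    intro i
    have h1 : dotProduct (v i) (A.mulVec (v i)) = lam i := by
      rw [hAv i, dotProduct_smul, horth]; simp
    have h2 := hbd (v i)
    rw [h1, horth] at h2
    simpa using h2
  have hdet : A.det = ∏ i, lam i := by
    have := hH.det_eq_prod_eigenvalues
    simpa using this
  have hdetle : ∀ i, A.det ≤ M^(q-1) * lam i := by
    intro i
    rw [hdet, ← Finset.mul_prod_erase univ lam (mem_univ i), mul_comm]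
    refine mul_le_mul ?_ le_rfl (hlam0 i) (by positivity)
    calc ∏ j ∈ univ.erase i, lam j ≤ ∏ _j ∈ univ.erase i, M :=
          Finset.prod_le_prod (fun j _ => hlam0 j) (fun j _ => hlamM j)
      _ = M ^ (q-1) := by
          rw [Finset.prod_const, Finset.card_erase_of_mem (mem_univ i), Finset.card_univ]
          simp
  rw [hnorm, hquad, Finset.mul_sum, Finset.mul_sum]
  refine Finset.sum_le_sum fun i _ => ?_
  calc A.det * (c i)^2 ≤ (M^(q-1) * lam i) * (c i)^2 :=
        mul_le_mul_of_nonneg_right (hdetle i) (sq_nonneg _)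
    _ = M^(q-1) * (lam i * (c i)^2) := by ring

lemma psd_det_nonneg {q : ℕ} {A : Matrix (Fin q) (Fin q) ℝ} (hA : A.PosSemidef) :
    0 ≤ A.det := by
  have := hA.1.det_eq_prod_eigenvalues
  have h2 : A.det = ∏ i, hA.1.eigenvalues i := by simpa using this
  rw [h2]
  exact Finset.prod_nonneg fun i _ => hA.eigenvalues_nonneg i

lemma quad_integral {q : ℕ} (φ : ℝ → Fin q → ℝ) (hφc : Continuous φ)
    (w : ℝ → ℝ) (hw : Continuous w) (a b : ℝ) (x : Fin q → ℝ) :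
    dotProduct x ((Matrix.of fun i j => ∫ s in a..b, w s * (φ s i * φ s j)).mulVec x)
      = ∫ s in a..b, w s * (dotProduct (φ s) x)^2 := by
  classical
  have hφi : ∀ i : Fin q, Continuous fun s => φ s i :=
    fun i => (continuous_apply i).comp hφc
  have hcont : ∀ i j : Fin q, Continuous fun s => x i * (w s * (φ s i * φ s j) * x j) := by
    intro i j
    exact continuous_const.mul (((hw.mul ((hφi i).mul (hφi j)))).mul continuous_const)
  have hInt : ∀ i j : Fin q,
      IntervalIntegrable (fun s => x i * (w s * (φ s i * φ s j) * x j)) volume a b :=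
    fun i j => (hcont i j).intervalIntegrable a b
  have step1 : ∀ i j : Fin q,
      x i * ((∫ s in a..b, w s * (φ s i * φ s j)) * x j)
        = ∫ s in a..b, x i * (w s * (φ s i * φ s j) * x j) := by
    intro i j
    rw [← intervalIntegral.integral_mul_const, ← intervalIntegral.integral_const_mul]
  calc dotProduct x ((Matrix.of fun i j => ∫ s in a..b, w s * (φ s i * φ s j)).mulVec x)
      = ∑ i, x i * ∑ j, (∫ s in a..b, w s * (φ s i * φ s j)) * x j := by
        simp [dotProduct, Matrix.mulVec, Matrix.of_apply]
    _ = ∑ i, ∑ j, ∫ s in a..b, x i * (w s * (φ s i * φ s j) * x j) := by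
        refine Finset.sum_congr rfl fun i _ => ?_
        rw [Finset.mul_sum]
        exact Finset.sum_congr rfl fun j _ => step1 i j
    _ = ∑ i, ∫ s in a..b, ∑ j, x i * (w s * (φ s i * φ s j) * x j) := by
        refine Finset.sum_congr rfl fun i _ => ?_
        rw [intervalIntegral.integral_finset_sum]
        exact fun j _ => hInt i j
    _ = ∫ s in a..b, ∑ i, ∑ j, x i * (w s * (φ s i * φ s j) * x j) := by
        rw [intervalIntegral.integral_finset_sum]
        intro i _
        apply Continuous.intervalIntegrable
        exact continuous_finset_sum _ fun j _ => hcont i j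
    _ = ∫ s in a..b, w s * (dotProduct (φ s) x)^2 := by
        refine intervalIntegral.integral_congr fun s _ => ?_
        rw [dotProduct, pow_two, Finset.sum_mul_sum, Finset.mul_sum]
        refine Finset.sum_congr rfl fun i _ => ?_
        rw [Finset.mul_sum]
        refine Finset.sum_congr rfl fun j _ => ?_
        ring

lemma kPhi_quad {q : ℕ} (α : ℝ) (φ : ℝ → Fin q → ℝ) (hφc : Continuous φ)
    (t : ℝ) (x : Fin q → ℝ) :
    dotProduct x ((kreisselmeierPhi q α φ t).mulVec x)
      = ∫ s in (0:ℝ)..t, Real.exp (-α * (t - s)) * (dotProduct (φ s) x)^2 :=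
  quad_integral φ hφc (fun s => Real.exp (-α * (t - s)))
    (Real.continuous_exp.comp (by fun_prop)) 0 t x

lemma gram_quad {q : ℕ} (φ : ℝ → Fin q → ℝ) (hφc : Continuous φ)
    (a b : ℝ) (x : Fin q → ℝ) :
    dotProduct x ((gramOn q φ a b).mulVec x)
      = ∫ s in a..b, (dotProduct (φ s) x)^2 := by
  have hm : gramOn q φ a b
      = Matrix.of fun i j => ∫ s in a..b, (fun _ : ℝ => (1:ℝ)) s * (φ s i * φ s j) := by
    unfold gramOn
    ext i j
    simp
  rw [hm, quad_integral φ hφc _ continuous_const a b x]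
  simp

lemma real_isHermitian_of_symm {n : ℕ} {A : Matrix (Fin n) (Fin n) ℝ}
    (h : ∀ i j, A i j = A j i) : A.IsHermitian :=
  Matrix.ext fun i j => by rw [Matrix.conjTranspose_apply, star_trivial, h j i]

lemma kPhi_herm {q : ℕ} (α : ℝ) (φ : ℝ → Fin q → ℝ) (t : ℝ) :
    (kreisselmeierPhi q α φ t).IsHermitian := by
  apply real_isHermitian_of_symm
  intro i j
  show (∫ s in (0:ℝ)..t, Real.exp (-α * (t - s)) * (φ s i * φ s j))
      = ∫ s in (0:ℝ)..t, Real.exp (-α * (t - s)) * (φ s j * φ s i)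
  exact intervalIntegral.integral_congr fun s _ => by ring

lemma gram_herm {q : ℕ} (φ : ℝ → Fin q → ℝ) (a b : ℝ) :
    (gramOn q φ a b).IsHermitian := by
  apply real_isHermitian_of_symm
  intro i j
  show (∫ s in a..b, φ s i * φ s j) = ∫ s in a..b, φ s j * φ s i
  exact intervalIntegral.integral_congr fun s _ => by ring

lemma kPhi_continuous {q : ℕ} (α : ℝ) (φ : ℝ → Fin q → ℝ) (hφc : Continuous φ) :
    Continuous fun t => kreisselmeierPhi q α φ t := by
  apply continuous_matrix
  intro i j
  have hφi : ∀ k : Fin q, Continuous fun s => φ s k :=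
    fun k => (continuous_apply k).comp hφc
  have hk : Continuous fun s => Real.exp (α*s) * (φ s i * φ s j) :=
    (Real.continuous_exp.comp (by fun_prop)).mul ((hφi i).mul (hφi j))
  have heq : (fun t => kreisselmeierPhi q α φ t i j)
      = fun t => Real.exp (-α*t) * ∫ s in (0:ℝ)..t, Real.exp (α*s) * (φ s i * φ s j) := by
    funext t
    show (∫ s in (0:ℝ)..t, Real.exp (-α*(t-s)) * (φ s i * φ s j)) = _
    rw [← intervalIntegral.integral_const_mul]
    refine intervalIntegral.integral_congr fun s _ => ?_
    have h1 : Real.exp (-α*(t-s)) = Real.exp (-α*t) * Real.exp (α*s) := by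
      rw [← Real.exp_add]; congr 1; ring
    rw [h1, mul_assoc]
  rw [heq]
  exact (Real.continuous_exp.comp (by fun_prop)).mul
    (intervalIntegral.continuous_primitive (fun a b => hk.intervalIntegrable a b) 0)

open intervalIntegral in
lemma integral_exp_weight (α : ℝ) (hα : 0 < α) (a t : ℝ) :
    (∫ s in a..t, Real.exp (-α * (t - s))) = (1 - Real.exp (-α * (t - a))) / α := by
  have h1 : ∀ s : ℝ, Real.exp (-α * (t - s)) = Real.exp (-α*t) * Real.exp (α*s) := by
    intro s; rw [← Real.exp_add]; congr 1; ring
  have e1 : Real.exp (-α*t) * Real.exp (α*t) = 1 := by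
    rw [← Real.exp_add]
    have : -α*t + α*t = 0 := by ring
    rw [this, Real.exp_zero]
  have e2 : Real.exp (-α*t) * Real.exp (α*a) = Real.exp (-α*(t-a)) := by
    rw [← Real.exp_add]; congr 1; ring
  calc (∫ s in a..t, Real.exp (-α * (t - s)))
      = ∫ s in a..t, Real.exp (-α*t) * Real.exp (α*s) :=
        intervalIntegral.integral_congr fun s _ => h1 s
    _ = Real.exp (-α*t) * ∫ s in a..t, Real.exp (α*s) :=
        intervalIntegral.integral_const_mul _ _
    _ = Real.exp (-α*t) * (α⁻¹ * (Real.exp (α*t) - Real.exp (α*a))) := by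
        rw [intervalIntegral.integral_comp_mul_left Real.exp hα.ne']
        simp [smul_eq_mul, integral_exp]
    _ = (1 - Real.exp (-α * (t - a))) / α := by
        rw [div_eq_inv_mul]
        have : Real.exp (-α*t) * (α⁻¹ * (Real.exp (α*t) - Real.exp (α*a)))
            = α⁻¹ * (Real.exp (-α*t) * Real.exp (α*t) - Real.exp (-α*t) * Real.exp (α*a)) := by
          ring
        rw [this, e1, e2]

set_option maxHeartbeats 1000000 in
/-- Result R1, ⇐: If `Δ = det Φ` is PE then `φ` is PE. -/
theorem kreisselmeier_det_pe_implies_pe (q : ℕ) (hq : 1 ≤ q) (α : ℝ)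
    (hα : 0 < α) (φ : ℝ → Fin q → ℝ) (hφc : Continuous φ)
    (hφb : ∃ C, ∀ t, 0 ≤ t → ‖φ t‖ ≤ C)
    (hΔPE : ∃ T' > (0:ℝ), ∃ δ' > (0:ℝ), ∀ t, 0 ≤ t →
      δ' ≤ ∫ s in t..t + T', ((kreisselmeierPhi q α φ s).det) ^ 2) :
    ∃ T > (0:ℝ), ∃ δ > (0:ℝ), ∀ t, 0 ≤ t →
      (gramOn q φ t (t + T) - δ • (1 : Matrix (Fin q) (Fin q) ℝ)).PosSemidef := by
  classical
  obtain ⟨C, hC⟩ := hφb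
  obtain ⟨T', hT', δ', hδ', hPE⟩ := hΔPE
  have hC0 : 0 ≤ C := (norm_nonneg _).trans (hC 0 le_rfl)
  set B : ℝ := q * C^2 with hBdef
  have hB0 : 0 ≤ B := by positivity
  set M : ℝ := B / α + 1 with hMdef
  have hM0 : 0 < M := by positivity
  have hBαM : B / α ≤ M := by rw [hMdef]; linarith
  have hMq : M ^ (q-1) * M = M ^ q := by rw [← pow_succ]; congr 1; omega
  have hMq0 : 0 < M ^ q := pow_pos hM0 q
  have hMq10 : 0 < M ^ (q-1) := pow_pos hM0 _
  set δ : ℝ := δ' / (2 * M^q * M^(q-1) * T') with hδdef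
  have hδ0 : 0 < δ := by
    apply div_pos hδ'
    positivity
  set L : ℝ := max 0 (Real.log (M / δ) / α) with hLdef
  have hL0 : 0 ≤ L := le_max_left _ _
  set E : ℝ := Real.exp (-(α*L)) * (B/α) with hEdef
  have hE0 : 0 ≤ E := by positivity
  have hE : E ≤ δ := by
    have h1 : Real.exp (-(α*L)) ≤ δ / M := by
      have hMδ : (0:ℝ) < M / δ := by positivity
      have hlog : Real.log (M/δ) ≤ α * L := by
        have h2 : Real.log (M/δ) / α ≤ L := le_max_right _ _
        calc Real.log (M/δ) = α * (Real.log (M/δ) / α) := by field_simp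
          _ ≤ α * L := mul_le_mul_of_nonneg_left h2 hα.le
      have h3 : -(α*L) ≤ Real.log (δ/M) := by
        have h4 : Real.log (δ/M) = - Real.log (M/δ) := by
          rw [← Real.log_inv]
          congr 1
          field_simp
        rw [h4]; linarith
      calc Real.exp (-(α*L)) ≤ Real.exp (Real.log (δ/M)) := Real.exp_le_exp.mpr h3
        _ = δ/M := Real.exp_log (by positivity)
    calc E = Real.exp (-(α*L)) * (B/α) := hEdef
      _ ≤ (δ/M) * M := mul_le_mul h1 hBαM (by positivity) (by positivity)
      _ = δ := by field_simp
  -- general facts about Φ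
  have hFB : ∀ (y : Fin q → ℝ) (u : ℝ), 0 ≤ u →
      (dotProduct (φ u) y)^2 ≤ B * dotProduct y y := by
    intro y u hu
    have h1 : (dotProduct (φ u) y)^2 ≤ (∑ i, (φ u i)^2) * ∑ i, (y i)^2 := by
      rw [dotProduct]
      exact Finset.sum_mul_sq_le_sq_mul_sq _ _ _
    have h2 : ∑ i, (φ u i)^2 ≤ B := by
      rw [hBdef]
      calc ∑ i, (φ u i)^2 ≤ ∑ _i : Fin q, C^2 := by
            refine Finset.sum_le_sum fun i _ => ?_
            have h3 : ‖φ u i‖ ≤ ‖φ u‖ := norm_le_pi_norm (φ u) i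
            have h4 : |φ u i| ≤ C := by
              rw [← Real.norm_eq_abs]
              exact h3.trans (hC u hu)
            calc (φ u i)^2 = |φ u i|^2 := (sq_abs _).symm
              _ ≤ C^2 := by
                  apply pow_le_pow_left₀ (abs_nonneg _) h4
        _ = q * C^2 := by
            rw [Finset.sum_const, Finset.card_univ, Fintype.card_fin, nsmul_eq_mul]
    have h5 : dotProduct y y = ∑ i, (y i)^2 := by
      rw [dotProduct]
      exact Finset.sum_congr rfl fun i _ => (pow_two (y i)).symm
    rw [h5]
    calc (dotProduct (φ u) y)^2 ≤ (∑ i, (φ u i)^2) * ∑ i, (y i)^2 := h1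
      _ ≤ B * ∑ i, (y i)^2 :=
          mul_le_mul_of_nonneg_right h2 (Finset.sum_nonneg fun i _ => sq_nonneg _)
  have hdoty0 : ∀ y : Fin q → ℝ, 0 ≤ dotProduct y y :=
    fun y => Finset.sum_nonneg fun i _ => mul_self_nonneg _
  have hFcont : ∀ y : Fin q → ℝ, Continuous fun u => (dotProduct (φ u) y)^2 := by
    intro y
    have : Continuous fun u => dotProduct (φ u) y :=
      continuous_finset_sum _ fun i _ => ((continuous_apply i).comp hφc).mul continuous_const
    exact this.pow 2
  have hquad_nonneg : ∀ (y : Fin q → ℝ) (s : ℝ), 0 ≤ s →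
      0 ≤ dotProduct y ((kreisselmeierPhi q α φ s).mulVec y) := by
    intro y s hs
    rw [kPhi_quad α φ hφc s y]
    exact intervalIntegral.integral_nonneg hs fun u _ =>
      mul_nonneg (Real.exp_nonneg _) (sq_nonneg _)
  have hub : ∀ (s : ℝ), 0 ≤ s → ∀ y : Fin q → ℝ,
      dotProduct y ((kreisselmeierPhi q α φ s).mulVec y)
        ≤ (B/α) * dotProduct y y := by
    intro s hs y
    rw [kPhi_quad α φ hφc s y]
    have hw : Continuous fun u : ℝ => Real.exp (-α * (s - u)) :=
      Real.continuous_exp.comp (by fun_prop)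
    calc (∫ u in (0:ℝ)..s, Real.exp (-α * (s - u)) * (dotProduct (φ u) y)^2)
        ≤ ∫ u in (0:ℝ)..s, Real.exp (-α * (s - u)) * (B * dotProduct y y) := by
          apply intervalIntegral.integral_mono_on hs
            ((hw.mul (hFcont y)).intervalIntegrable _ _)
            ((hw.mul continuous_const).intervalIntegrable _ _)
          intro u hu
          exact mul_le_mul_of_nonneg_left (hFB y u hu.1) (Real.exp_nonneg _)
      _ = (B * dotProduct y y) * ((1 - Real.exp (-α * (s - 0)))/α) := by
          rw [intervalIntegral.integral_mul_const, integral_exp_weight α hα]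
          ring
      _ ≤ (B/α) * dotProduct y y := by
          have h4 : 0 ≤ Real.exp (-α*(s-0)) := Real.exp_nonneg _
          have h6 : 0 ≤ B * dotProduct y y := mul_nonneg hB0 (hdoty0 y)
          have h5 : (1 - Real.exp (-α*(s-0)))/α ≤ 1/α :=
            (div_le_div_iff_of_pos_right hα).mpr (by linarith only [h4])
          calc (B * dotProduct y y) * ((1 - Real.exp (-α * (s - 0)))/α)
              ≤ (B * dotProduct y y) * (1/α) :=
                mul_le_mul_of_nonneg_left h5 h6
            _ = (B/α) * dotProduct y y := by ring
  have hbdM : ∀ (s : ℝ), 0 ≤ s → ∀ y : Fin q → ℝ,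
      dotProduct y ((kreisselmeierPhi q α φ s).mulVec y)
        ≤ M * dotProduct y y := by
    intro s hs y
    calc dotProduct y ((kreisselmeierPhi q α φ s).mulVec y)
        ≤ (B/α) * dotProduct y y := hub s hs y
      _ ≤ M * dotProduct y y := mul_le_mul_of_nonneg_right hBαM (hdoty0 y)
  have hPSDΦ : ∀ (s : ℝ), 0 ≤ s → (kreisselmeierPhi q α φ s).PosSemidef := by
    intro s hs
    refine Matrix.PosSemidef.of_dotProduct_mulVec_nonneg (kPhi_herm α φ s) fun y => ?_
    have hy : star y = y := rfl
    rw [hy]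
    exact hquad_nonneg y s hs
  have hdet0 : ∀ (s : ℝ), 0 ≤ s → 0 ≤ (kreisselmeierPhi q α φ s).det :=
    fun s hs => psd_det_nonneg (hPSDΦ s hs)
  have hdetle : ∀ (s : ℝ), 0 ≤ s → (kreisselmeierPhi q α φ s).det ≤ M^q := by
    intro s hs
    set i0 : Fin q := ⟨0, hq⟩
    have h1 := psd_det_le (kreisselmeierPhi q α φ s) (hPSDΦ s hs) M hM0.le
      (hbdM s hs) (Pi.single i0 1)
    have h2 : dotProduct (Pi.single i0 (1:ℝ)) (Pi.single i0 (1:ℝ)) = 1 := by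
      rw [dotProduct_single]
      simp
    have h3 := hbdM s hs (Pi.single i0 1)
    rw [h2] at h1 h3
    rw [mul_one] at h1 h3
    calc (kreisselmeierPhi q α φ s).det
        ≤ M^(q-1) * dotProduct (Pi.single i0 1)
            ((kreisselmeierPhi q α φ s).mulVec (Pi.single i0 1)) := h1
      _ ≤ M^(q-1) * M := mul_le_mul_of_nonneg_left h3 hMq10.le
      _ = M^q := hMq
  have hΔcont : Continuous fun s => (kreisselmeierPhi q α φ s).det :=
    (kPhi_continuous α φ hφc).matrix_det
  -- the conclusion
  refine ⟨L + T', by linarith, δ, hδ0, ?_⟩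
  intro t ht
  have hδ1herm : (δ • (1 : Matrix (Fin q) (Fin q) ℝ)).IsHermitian := by
    apply real_isHermitian_of_symm
    intro i j
    simp only [Matrix.smul_apply, Matrix.one_apply, smul_eq_mul]
    by_cases h : i = j
    · subst h; rfl
    · rw [if_neg h, if_neg (Ne.symm h)]
  refine Matrix.PosSemidef.of_dotProduct_mulVec_nonneg ((gram_herm φ t (t + (L+T'))).sub hδ1herm) ?_
  intro x
  have hx : star x = x := rfl
  rw [hx, Matrix.sub_mulVec, dotProduct_sub, Matrix.smul_mulVec,
    Matrix.one_mulVec, dotProduct_smul, smul_eq_mul,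
    gram_quad φ hφc t (t + (L+T')) x]
  set S : ℝ := dotProduct x x with hSdef
  have hS0 : 0 ≤ S := hdoty0 x
  set I : ℝ := ∫ u in t..t + (L+T'), (dotProduct (φ u) x)^2 with hIdef
  have hI0 : 0 ≤ I :=
    intervalIntegral.integral_nonneg (by linarith) fun u _ => sq_nonneg _
  -- it suffices to show δ * S ≤ I
  suffices h : δ * S ≤ I by linarith only [h]
  set t0 : ℝ := t + L with ht0def
  have ht0 : 0 ≤ t0 := by rw [ht0def]; linarith
  have h1 : δ' ≤ ∫ s in t0..t0 + T', ((kreisselmeierPhi q α φ s).det)^2 := hPE t0 ht0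
  have h2 : (∫ s in t0..t0 + T', ((kreisselmeierPhi q α φ s).det)^2)
      ≤ M^q * ∫ s in t0..t0 + T', (kreisselmeierPhi q α φ s).det := by
    rw [← intervalIntegral.integral_const_mul]
    apply intervalIntegral.integral_mono_on (by linarith)
      ((hΔcont.pow 2).intervalIntegrable _ _)
      ((continuous_const.mul hΔcont).intervalIntegrable _ _)
    intro s hs
    have hs0 : 0 ≤ s := le_trans ht0 hs.1
    have ha := hdetle s hs0
    have hb := hdet0 s hs0
    calc ((kreisselmeierPhi q α φ s).det)^2
        = (kreisselmeierPhi q α φ s).det * (kreisselmeierPhi q α φ s).det := pow_two _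
      _ ≤ M^q * (kreisselmeierPhi q α φ s).det := mul_le_mul_of_nonneg_right ha hb
  have hIΔ : δ' / M^q ≤ ∫ s in t0..t0 + T', (kreisselmeierPhi q α φ s).det := by
    rw [div_le_iff₀ hMq0]
    calc δ' ≤ M^q * ∫ s in t0..t0 + T', (kreisselmeierPhi q α φ s).det := le_trans h1 h2
      _ = (∫ s in t0..t0 + T', (kreisselmeierPhi q α φ s).det) * M^q := by ring
  -- pointwise bound on the quadratic form on [t0, t0+T']
  have hpt : ∀ s ∈ Set.Icc t0 (t0 + T'),
      (kreisselmeierPhi q α φ s).det * S ≤ M^(q-1) * (E * S + I) := by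
    intro s hs
    have hs0 : 0 ≤ s := le_trans ht0 hs.1
    have hst : t ≤ s := by
      have h9 := hs.1; rw [ht0def] at h9; linarith only [h9, hL0]
    have hA : dotProduct x ((kreisselmeierPhi q α φ s).mulVec x) ≤ E * S + I := by
      rw [kPhi_quad α φ hφc s x]
      have hw : Continuous fun u : ℝ => Real.exp (-α * (s - u)) :=
        Real.continuous_exp.comp (by fun_prop)
      have hint1 : IntervalIntegrable
          (fun u => Real.exp (-α * (s - u)) * (dotProduct (φ u) x)^2) volume 0 t :=
        (hw.mul (hFcont x)).intervalIntegrable _ _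
      have hint2 : IntervalIntegrable
          (fun u => Real.exp (-α * (s - u)) * (dotProduct (φ u) x)^2) volume t s :=
        (hw.mul (hFcont x)).intervalIntegrable _ _
      rw [← intervalIntegral.integral_add_adjacent_intervals hint1 hint2]
      have hp1 : (∫ u in (0:ℝ)..t, Real.exp (-α * (s - u)) * (dotProduct (φ u) x)^2)
          ≤ E * S := by
        have heq : (∫ u in (0:ℝ)..t, Real.exp (-α * (s - u)) * (dotProduct (φ u) x)^2)
            = Real.exp (-(α*(s-t))) *
              ∫ u in (0:ℝ)..t, Real.exp (-α * (t - u)) * (dotProduct (φ u) x)^2 := by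
          rw [← intervalIntegral.integral_const_mul]
          refine intervalIntegral.integral_congr fun u _ => ?_
          rw [← mul_assoc, ← Real.exp_add]
          congr 2
          ring
        rw [heq, ← kPhi_quad α φ hφc t x]
        have hexple : Real.exp (-(α*(s-t))) ≤ Real.exp (-(α*L)) := by
          apply Real.exp_le_exp.mpr
          have hsl : L ≤ s - t := by
            have h9 := hs.1; rw [ht0def] at h9; linarith only [h9]
          have h7 := mul_le_mul_of_nonneg_left hsl hα.le
          linarith only [h7]
        have hq1 := hub t ht x
        have hq2 := hquad_nonneg x t ht
        calc Real.exp (-(α*(s-t)))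
              * dotProduct x ((kreisselmeierPhi q α φ t).mulVec x)
            ≤ Real.exp (-(α*L)) * ((B/α) * S) := by
              apply mul_le_mul hexple hq1 hq2 (Real.exp_nonneg _)
          _ = E * S := by rw [hEdef]; ring
      have hp2 : (∫ u in t..s, Real.exp (-α * (s - u)) * (dotProduct (φ u) x)^2)
          ≤ I := by
        calc (∫ u in t..s, Real.exp (-α * (s - u)) * (dotProduct (φ u) x)^2)
            ≤ ∫ u in t..s, (dotProduct (φ u) x)^2 := by
              apply intervalIntegral.integral_mono_on hst hint2
                ((hFcont x).intervalIntegrable _ _)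
              intro u hu
              have hgood : Real.exp (-α * (s - u)) ≤ 1 := by
                rw [Real.exp_le_one_iff]
                have h9 : 0 ≤ α * (s - u) := mul_nonneg hα.le (by linarith only [hu.2])
                linarith only [h9]
              exact mul_le_of_le_one_left (sq_nonneg _) hgood
          _ ≤ I := by
              rw [hIdef]
              apply intervalIntegral.integral_mono_interval le_rfl hst ?_ ?_
                ((hFcont x).intervalIntegrable _ _)
              · have h9 := hs.2; rw [ht0def] at h9; linarith only [h9]
              · exact Filter.Eventually.of_forall fun u => sq_nonneg _
      linarith only [hp1, hp2]
    have hB2 := psd_det_le (kreisselmeierPhi q α φ s) (hPSDΦ s hs0) M hM0.le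
      (hbdM s hs0) x
    calc (kreisselmeierPhi q α φ s).det * S
        ≤ M^(q-1) * dotProduct x ((kreisselmeierPhi q α φ s).mulVec x) := hB2
      _ ≤ M^(q-1) * (E * S + I) := mul_le_mul_of_nonneg_left hA hMq10.le
  have hmain : (∫ s in t0..t0 + T', (kreisselmeierPhi q α φ s).det) * S
      ≤ T' * (M^(q-1) * (E * S + I)) := by
    rw [← intervalIntegral.integral_mul_const]
    calc (∫ s in t0..t0 + T', (kreisselmeierPhi q α φ s).det * S)
        ≤ ∫ _s in t0..t0 + T', M^(q-1) * (E * S + I) := by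
          apply intervalIntegral.integral_mono_on (by linarith)
            ((hΔcont.mul continuous_const).intervalIntegrable _ _)
            (continuous_const.intervalIntegrable _ _)
          exact hpt
      _ = T' * (M^(q-1) * (E * S + I)) := by
          rw [intervalIntegral.integral_const]
          rw [smul_eq_mul]
          ring_nf
  -- combine
  have hfinal : (δ' / M^q) * S ≤ T' * (M^(q-1) * (E * S + I)) := by
    calc (δ' / M^q) * S ≤ (∫ s in t0..t0 + T', (kreisselmeierPhi q α φ s).det) * S :=
          mul_le_mul_of_nonneg_right hIΔ hS0
      _ ≤ T' * (M^(q-1) * (E * S + I)) := hmain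
  have e1 : δ' / M^q = 2 * M^(q-1) * T' * δ := by
    rw [hδdef]
    field_simp
  have e3 : T' * M^(q-1) * E * S ≤ T' * M^(q-1) * δ * S := by
    have h8 := mul_le_mul_of_nonneg_right hE (mul_nonneg (mul_nonneg hT'.le hMq10.le) hS0)
    calc T' * M^(q-1) * E * S = E * (T' * M^(q-1) * S) := by ring
      _ ≤ δ * (T' * M^(q-1) * S) := h8
      _ = T' * M^(q-1) * δ * S := by ring
  have hkey : T' * M^(q-1) * (δ * S) ≤ T' * M^(q-1) * I := by
    rw [e1] at hfinal
    have e4 : T' * (M^(q-1) * (E * S + I)) = T' * M^(q-1) * E * S + T' * M^(q-1) * I := by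
      ring
    rw [e4] at hfinal
    linarith only [hfinal, e3]
  have hpos : 0 < T' * M^(q-1) := mul_pos hT' hMq10
  exact le_of_mul_le_mul_left hkey hpos
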